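/- arXiv:2512.14214 — 3 statements merged into one kernel-verified Lean document; each statement's English description precedes it below -/
import Mathlib

section
/- Suppose Φ is Lipschitz continuous with constant |Φ|_Lip, h is integrable on [0,∞) with |Φ|_Lip·‖h‖₁ < 1, ξ is bounded on [0,∞), and λ : [0,∞) → [0,∞) is a locally bounded nonnegative solution of λ(t) = Φ(ξ(t) + ∫₀^t h(t−s)λ(s) ds). Then λ is bounded on [0,∞), with sup_{t≥0} λ(t) ≤ (Φ(0) + |Φ|_Lip·‖ξ‖_∞)/(1 − |Φ|_Lip·‖h‖₁). -/
open MeasureTheory Set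

/-- Strong subcriticality implies boundedness of the solution, with the explicit bound
sup λ ≤ (Φ(0) + |Φ|_Lip ‖ξ‖_∞)/(1 − |Φ|_Lip ‖h‖₁). -/
theorem bounded_subcritical
    (Φ h ξ lam : ℝ → ℝ) (L Cξ : ℝ)
    (hLip : ∀ x y : ℝ, |Φ x - Φ y| ≤ L * |x - y|)
    (hΦpos : ∀ x, 0 ≤ Φ x)
    (hh : IntegrableOn h (Ici 0))
    (hsub : L * ∫ u in Ici (0:ℝ), |h u| < 1)
    (hξbdd : ∀ t ≥ (0:ℝ), |ξ t| ≤ Cξ)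
    (hlam_nonneg : ∀ t, 0 ≤ lam t)
    (hlam_locbdd : ∀ T > (0:ℝ), ∃ C : ℝ, ∀ t ∈ Icc (0:ℝ) T, lam t ≤ C)
    (hlam_meas : Measurable lam)
    (heq : ∀ t ≥ (0:ℝ), lam t = Φ (ξ t + ∫ s in (0:ℝ)..t, h (t - s) * lam s)) :
    ∀ t ≥ (0:ℝ),
      lam t ≤ (Φ 0 + L * Cξ) / (1 - L * ∫ u in Ici (0:ℝ), |h u|) := by
  intro t₀ ht₀
  set J : ℝ := ∫ u in Ici (0:ℝ), |h u| with hJdef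
  set q : ℝ := L * J with hqdef
  have hL : 0 ≤ L := le_trans (abs_nonneg _) (by simpa using hLip 1 0)
  have hCξ : 0 ≤ Cξ := le_trans (abs_nonneg _) (hξbdd 0 le_rfl)
  have hJ0 : 0 ≤ J := integral_nonneg fun u => abs_nonneg _
  have hq0 : 0 ≤ q := mul_nonneg hL hJ0
  have hq1 : q < 1 := hsub
  set T : ℝ := t₀ + 1 with hTdef
  have hT : 0 < T := by linarith
  obtain ⟨C, hC⟩ := hlam_locbdd T hT
  have hne : (lam '' Icc 0 T).Nonempty := ⟨lam 0, 0, ⟨le_rfl, hT.le⟩, rfl⟩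
  have hbdd : BddAbove (lam '' Icc 0 T) := ⟨C, by rintro y ⟨s, hs, rfl⟩; exact hC s hs⟩
  set S : ℝ := sSup (lam '' Icc 0 T) with hSdef
  have hSmem : ∀ s ∈ Icc (0:ℝ) T, lam s ≤ S := fun s hs => le_csSup hbdd ⟨s, hs, rfl⟩
  have hS0 : 0 ≤ S := le_trans (hlam_nonneg 0) (hSmem 0 ⟨le_rfl, hT.le⟩)
  have hΦbd : ∀ x, Φ x ≤ Φ 0 + L * |x| := by
    intro x
    have h2 : Φ x - Φ 0 ≤ L * |x - 0| := le_trans (le_abs_self _) (hLip x 0)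
    rw [sub_zero] at h2
    linarith
  have key : ∀ t ∈ Icc (0:ℝ) T, lam t ≤ (Φ 0 + L * Cξ) + q * S := by
    intro t ht
    have ht0 : (0:ℝ) ≤ t := ht.1
    -- integrability of |h (t - ·)| on Ioc 0 t
    have hI1 : IntervalIntegrable (fun u => |h u|) volume 0 t := by
      rw [intervalIntegrable_iff_integrableOn_Ioc_of_le ht0]
      exact (hh.mono_set (fun x hx => hx.1.le)).abs
    have hI2 : IntervalIntegrable (fun s => |h (t - s)|) volume 0 t := by
      simpa using (hI1.comp_sub_left t).symm
    have hI2' : IntegrableOn (fun s => |h (t - s)|) (Ioc 0 t) :=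
      (intervalIntegrable_iff_integrableOn_Ioc_of_le ht0).mp hI2
    have habs : |∫ s in Ioc (0:ℝ) t, h (t - s) * lam s|
        ≤ ∫ s in Ioc (0:ℝ) t, |h (t - s) * lam s| := by
      simpa only [Real.norm_eq_abs] using
        norm_integral_le_integral_norm (μ := volume.restrict (Ioc (0:ℝ) t))
          (f := fun s => h (t - s) * lam s)
    have hmono : ∫ s in Ioc (0:ℝ) t, |h (t - s) * lam s|
        ≤ ∫ s in Ioc (0:ℝ) t, |h (t - s)| * S := by
      apply integral_mono_of_nonneg
      · exact ae_of_all _ fun s => abs_nonneg _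
      · exact hI2'.mul_const S
      · filter_upwards [ae_restrict_mem measurableSet_Ioc] with s hs
        rw [abs_mul, abs_of_nonneg (hlam_nonneg s)]
        exact mul_le_mul_of_nonneg_left
          (hSmem s ⟨hs.1.le, hs.2.trans ht.2⟩) (abs_nonneg _)
    have hcov : (∫ s in Ioc (0:ℝ) t, |h (t - s)|) = ∫ u in Ioc (0:ℝ) t, |h u| := by
      rw [← intervalIntegral.integral_of_le ht0, ← intervalIntegral.integral_of_le ht0,
        intervalIntegral.integral_comp_sub_left (fun u => |h u|) t]
      simp
    have hsubset : (∫ u in Ioc (0:ℝ) t, |h u|) ≤ J :=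
      setIntegral_mono_set hh.abs (ae_of_all _ fun u => abs_nonneg _)
        (HasSubset.Subset.eventuallyLE (fun x hx => hx.1.le))
    have hIbound : |∫ s in (0:ℝ)..t, h (t - s) * lam s| ≤ J * S := by
      rw [intervalIntegral.integral_of_le ht0]
      calc |∫ s in Ioc (0:ℝ) t, h (t - s) * lam s|
          ≤ ∫ s in Ioc (0:ℝ) t, |h (t - s) * lam s| := habs
        _ ≤ ∫ s in Ioc (0:ℝ) t, |h (t - s)| * S := hmono
        _ = (∫ s in Ioc (0:ℝ) t, |h (t - s)|) * S := integral_mul_const _ _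
        _ = (∫ u in Ioc (0:ℝ) t, |h u|) * S := by rw [hcov]
        _ ≤ J * S := mul_le_mul_of_nonneg_right hsubset hS0
    rw [heq t ht0]
    set I : ℝ := ∫ s in (0:ℝ)..t, h (t - s) * lam s with hIdef
    calc Φ (ξ t + I) ≤ Φ 0 + L * |ξ t + I| := hΦbd _
      _ ≤ Φ 0 + L * (Cξ + J * S) := by
          have h1 : |ξ t + I| ≤ |ξ t| + |I| := abs_add_le _ _
          have h2 : |ξ t| ≤ Cξ := hξbdd t ht0
          have h3 : |ξ t + I| ≤ Cξ + J * S := by linarith [hIbound]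
          nlinarith
      _ = (Φ 0 + L * Cξ) + q * S := by rw [hqdef]; ring
  have hSle : S ≤ (Φ 0 + L * Cξ) + q * S := by
    apply csSup_le hne
    rintro y ⟨s, hs, rfl⟩
    exact key s hs
  have hfin : S ≤ (Φ 0 + L * Cξ) / (1 - q) := by
    rw [le_div_iff₀ (by linarith)]
    nlinarith
  exact le_trans (hSmem t₀ ⟨ht₀, by linarith⟩) hfin
end

section
/- (Comparison principle.) Let h : [0,∞) → [0,∞) be nonnegative and locally integrable, ξ : [0,∞) → ℝ continuous and locally bounded, and let Φ₁, Φ₂ : ℝ → [0,∞) be Lipschitz continuous with Φ₁ nondecreasing and Φ₁(x) ≤ Φ₂(x) for all x. Let λ₁, λ₂ be the continuous solutions of λᵢ(t) = Φᵢ(ξ(t) + ∫₀^t h(t−s) λᵢ(s) ds). Then λ₁(t) ≤ λ₂(t) for all t ≥ 0. -/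
open MeasureTheory Set

/-- Comparison principle: if h ≥ 0, Φ₁ is nondecreasing and Φ₁ ≤ Φ₂ pointwise, then
the corresponding solutions of the nonlinear renewal equation satisfy λ₁ ≤ λ₂. -/
theorem comparison_principle
    (Φ₁ Φ₂ h ξ lam₁ lam₂ : ℝ → ℝ) (L₁ L₂ : ℝ)
    (hh_nonneg : ∀ t ≥ (0:ℝ), 0 ≤ h t)
    (hh_locint : ∀ T > (0:ℝ), IntegrableOn h (Icc 0 T))
    (hξcont : Continuous ξ)
    (hξlocbdd : ∀ T > (0:ℝ), ∃ C : ℝ, ∀ t ∈ Icc (0:ℝ) T, |ξ t| ≤ C)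
    (hLip₁ : ∀ x y : ℝ, |Φ₁ x - Φ₁ y| ≤ L₁ * |x - y|)
    (hLip₂ : ∀ x y : ℝ, |Φ₂ x - Φ₂ y| ≤ L₂ * |x - y|)
    (hΦ₁pos : ∀ x, 0 ≤ Φ₁ x) (hΦ₂pos : ∀ x, 0 ≤ Φ₂ x)
    (hmono : Monotone Φ₁)
    (hle : ∀ x, Φ₁ x ≤ Φ₂ x)
    (hcont₁ : Continuous lam₁) (hcont₂ : Continuous lam₂)
    (heq₁ : ∀ t ≥ (0:ℝ), lam₁ t = Φ₁ (ξ t + ∫ s in (0:ℝ)..t, h (t - s) * lam₁ s))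
    (heq₂ : ∀ t ≥ (0:ℝ), lam₂ t = Φ₂ (ξ t + ∫ s in (0:ℝ)..t, h (t - s) * lam₂ s)) :
    ∀ t ≥ (0:ℝ), lam₁ t ≤ lam₂ t := by
  set L : ℝ := max L₁ 1 with hLdef
  have hLpos : (0:ℝ) < L := lt_of_lt_of_le one_pos (le_max_right _ _)
  set d : ℝ → ℝ := fun s => max (lam₁ s - lam₂ s) 0 with hddef
  have hdcont : Continuous d := (hcont₁.sub hcont₂).max continuous_const
  have hdnn : ∀ s, 0 ≤ d s := fun s => le_max_right _ _
  -- integrability of the reflected kernel times a continuous function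
  have hint : ∀ t : ℝ, 0 < t → ∀ g : ℝ → ℝ, Continuous g →
      IntervalIntegrable (fun s => h (t - s) * g s) volume 0 t := by
    intro t ht g hg
    have h1 : IntervalIntegrable h volume 0 t := by
      apply IntegrableOn.intervalIntegrable
      rw [uIcc_of_le ht.le]
      exact hh_locint t ht
    have h2 := h1.comp_sub_left t
    simp only [sub_zero, sub_self] at h2
    exact h2.symm.mul_continuousOn hg.continuousOn
  -- key Gronwall-type inequality
  have key : ∀ t : ℝ, 0 ≤ t → lam₁ t - lam₂ t ≤ L * ∫ s in (0:ℝ)..t, h (t - s) * d s := by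
    intro t ht
    rcases eq_or_lt_of_le ht with rfl | ht
    · have e1 := heq₁ 0 le_rfl
      have e2 := heq₂ 0 le_rfl
      rw [intervalIntegral.integral_same] at e1 e2
      rw [intervalIntegral.integral_same, mul_zero, e1, e2]
      exact sub_nonpos.mpr (hle _)
    · have hJnn : 0 ≤ ∫ s in (0:ℝ)..t, h (t - s) * d s := by
        apply intervalIntegral.integral_nonneg ht.le
        intro u hu
        exact mul_nonneg (hh_nonneg _ (by linarith [hu.2])) (hdnn u)
      set I₁ := ∫ s in (0:ℝ)..t, h (t - s) * lam₁ s with hI₁def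
      set I₂ := ∫ s in (0:ℝ)..t, h (t - s) * lam₂ s with hI₂def
      have hΦ : lam₁ t - lam₂ t ≤ Φ₁ (ξ t + I₁) - Φ₁ (ξ t + I₂) := by
        rw [heq₁ t ht.le, heq₂ t ht.le]
        have := hle (ξ t + I₂)
        linarith
      rcases le_or_gt I₁ I₂ with hI | hI
      · have hm := hmono (by linarith : ξ t + I₁ ≤ ξ t + I₂)
        have := mul_nonneg hLpos.le hJnn
        linarith
      · have h1 := hint t ht lam₁ hcont₁
        have h2 := hint t ht lam₂ hcont₂
        have hdif := hint t ht (fun s => lam₁ s - lam₂ s) (hcont₁.sub hcont₂)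
        have hdint := hint t ht d hdcont
        have hsub : (∫ s in (0:ℝ)..t, h (t - s) * (lam₁ s - lam₂ s)) = I₁ - I₂ := by
          simp_rw [mul_sub]
          exact intervalIntegral.integral_sub h1 h2
        have hmonoI : I₁ - I₂ ≤ ∫ s in (0:ℝ)..t, h (t - s) * d s := by
          rw [← hsub]
          refine intervalIntegral.integral_mono_on ht.le hdif hdint fun x hx => ?_
          exact mul_le_mul_of_nonneg_left (le_max_left _ _) (hh_nonneg _ (by linarith [hx.2]))
        have habs := hLip₁ (ξ t + I₁) (ξ t + I₂)
        have hlip : Φ₁ (ξ t + I₁) - Φ₁ (ξ t + I₂) ≤ L₁ * (I₁ - I₂) := by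
          have h3 := le_trans (le_abs_self _) habs
          rwa [show ξ t + I₁ - (ξ t + I₂) = I₁ - I₂ by ring,
            abs_of_pos (by linarith : (0:ℝ) < I₁ - I₂)] at h3
        have hL₁L : L₁ * (I₁ - I₂) ≤ L * (I₁ - I₂) :=
          mul_le_mul_of_nonneg_right (le_max_left _ _) (by linarith)
        have hfin : L * (I₁ - I₂) ≤ L * ∫ s in (0:ℝ)..t, h (t - s) * d s :=
          mul_le_mul_of_nonneg_left hmonoI hLpos.le
        linarith
  have hd_le : ∀ t : ℝ, 0 ≤ t → d t ≤ L * ∫ s in (0:ℝ)..t, h (t - s) * d s := by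
    intro t ht
    have hJnn : 0 ≤ ∫ s in (0:ℝ)..t, h (t - s) * d s := by
      apply intervalIntegral.integral_nonneg ht
      intro u hu
      exact mul_nonneg (hh_nonneg _ (by linarith [hu.2])) (hdnn u)
    exact max_le (key t ht) (mul_nonneg hLpos.le hJnn)
  -- choose a small step δ
  obtain ⟨δ, hδ0, hδ1, hδint⟩ :
      ∃ δ : ℝ, 0 < δ ∧ δ ≤ 1 ∧ (∫ s in Ioc (0:ℝ) δ, h s) < 1 / (2 * L) := by
    have hI1 : IntegrableOn h (Icc 0 1) := hh_locint 1 one_pos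
    have hF := intervalIntegral.continuousOn_primitive hI1
    have hF0 : ContinuousWithinAt (fun x => ∫ s in Ioc (0:ℝ) x, h s) (Icc 0 1) 0 :=
      hF 0 ⟨le_rfl, zero_le_one⟩
    have h00 : (∫ s in Ioc (0:ℝ) (0:ℝ), h s) = 0 := by simp
    have hT : Filter.Tendsto (fun x => ∫ s in Ioc (0:ℝ) x, h s)
        (nhdsWithin 0 (Icc 0 1)) (nhds 0) := by
      have h' : Filter.Tendsto (fun x => ∫ s in Ioc (0:ℝ) x, h s)
          (nhdsWithin 0 (Icc 0 1)) (nhds (∫ s in Ioc (0:ℝ) (0:ℝ), h s)) := hF0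
      rwa [h00] at h'
    have hev : ∀ᶠ x in nhdsWithin (0:ℝ) (Icc 0 1),
        (∫ s in Ioc (0:ℝ) x, h s) < 1 / (2 * L) :=
      hT.eventually_lt_const (by positivity)
    have hev2 : ∀ᶠ x in nhdsWithin (0:ℝ) (Ioc 0 1),
        (∫ s in Ioc (0:ℝ) x, h s) < 1 / (2 * L) :=
      hev.filter_mono (nhdsWithin_mono 0 Ioc_subset_Icc_self)
    have hnb : (nhdsWithin (0:ℝ) (Ioc 0 1)).NeBot := by
      rw [← mem_closure_iff_nhdsWithin_neBot, closure_Ioc (one_ne_zero).symm]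
      exact ⟨le_rfl, zero_le_one⟩
    obtain ⟨δ, hδP, hδmem⟩ := (hev2.and eventually_mem_nhdsWithin).exists
    exact ⟨δ, hδmem.1, hδmem.2, hδP⟩
  have hsmall : ∀ u : ℝ, 0 ≤ u → u ≤ δ → (∫ s in (0:ℝ)..u, h s) ≤ 1 / (2 * L) := by
    intro u hu0 huδ
    rw [intervalIntegral.integral_of_le hu0]
    refine le_trans (setIntegral_mono_set ?_ ?_ ?_) hδint.le
    · exact (hh_locint 1 one_pos).mono_set fun x hx => ⟨hx.1.le, hx.2.trans hδ1⟩
    · exact ae_restrict_of_forall_mem measurableSet_Ioc fun x hx => hh_nonneg x hx.1.le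
    · exact (Ioc_subset_Ioc_right huδ).eventuallyLE
  -- main induction
  have main : ∀ n : ℕ, ∀ t ∈ Icc (0:ℝ) ((n:ℝ) * δ), lam₁ t ≤ lam₂ t := by
    intro n
    induction n with
    | zero =>
      intro t ht
      simp only [Nat.cast_zero, zero_mul] at ht
      have ht0 : t = 0 := le_antisymm ht.2 ht.1
      subst ht0
      have := key 0 le_rfl
      rw [intervalIntegral.integral_same, mul_zero] at this
      linarith
    | succ n ih =>
      have hnδnn : (0:ℝ) ≤ (n:ℝ) * δ := by positivity
      have hsup : ∀ t ∈ Icc (0:ℝ) (((n:ℝ) + 1) * δ), lam₁ t ≤ lam₂ t := by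
        set T : ℝ := ((n:ℝ) + 1) * δ with hTdef
        have hTpos : 0 < T := by positivity
        obtain ⟨t₀, ht₀mem, ht₀max⟩ :=
          isCompact_Icc.exists_isMaxOn (nonempty_Icc.mpr hTpos.le) hdcont.continuousOn
        have hdleM : ∀ s ∈ Icc (0:ℝ) T, d s ≤ d t₀ := fun s hs => ht₀max hs
        have hdIH : ∀ s ∈ Icc (0:ℝ) ((n:ℝ) * δ), d s = 0 := fun s hs =>
          max_eq_right (sub_nonpos.mpr (ih s hs))
        have hM : d t₀ ≤ 0 := by
          rcases le_or_gt t₀ ((n:ℝ) * δ) with hcase | hcase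
          · exact (hdIH t₀ ⟨ht₀mem.1, hcase⟩).le
          · have ht₀pos : 0 < t₀ := lt_of_le_of_lt hnδnn hcase
            have hII : IntervalIntegrable (fun s => h (t₀ - s) * d s) volume 0 t₀ :=
              hint t₀ ht₀pos d hdcont
            have hsub1 : uIcc (0:ℝ) ((n:ℝ) * δ) ⊆ uIcc (0:ℝ) t₀ := by
              rw [uIcc_of_le hnδnn, uIcc_of_le ht₀pos.le]
              exact Icc_subset_Icc_right hcase.le
            have hsub2 : uIcc ((n:ℝ) * δ) t₀ ⊆ uIcc (0:ℝ) t₀ := by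
              rw [uIcc_of_le hcase.le, uIcc_of_le ht₀pos.le]
              exact Icc_subset_Icc_left hnδnn
            have hII1 := hII.mono_set hsub1
            have hII2 := hII.mono_set hsub2
            have hsplit := intervalIntegral.integral_add_adjacent_intervals hII1 hII2
            have hzero : (∫ s in (0:ℝ)..((n:ℝ) * δ), h (t₀ - s) * d s) = 0 := by
              rw [show (∫ s in (0:ℝ)..((n:ℝ) * δ), h (t₀ - s) * d s)
                  = ∫ s in (0:ℝ)..((n:ℝ) * δ), (0:ℝ) from
                intervalIntegral.integral_congr fun s hs => by
                  rw [uIcc_of_le hnδnn] at hs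
                  rw [hdIH s hs, mul_zero]]
              simp
            have hconst : IntervalIntegrable (fun s => h (t₀ - s) * d t₀) volume
                ((n:ℝ) * δ) t₀ :=
              (hint t₀ ht₀pos (fun _ => d t₀) continuous_const).mono_set hsub2
            have hb : (∫ s in ((n:ℝ) * δ)..t₀, h (t₀ - s) * d s)
                ≤ ∫ s in ((n:ℝ) * δ)..t₀, h (t₀ - s) * d t₀ := by
              refine intervalIntegral.integral_mono_on hcase.le hII2 hconst fun x hx => ?_
              refine mul_le_mul_of_nonneg_left
                (hdleM x ⟨hnδnn.trans hx.1, hx.2.trans ht₀mem.2⟩)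
                (hh_nonneg _ (by linarith [hx.2]))
            have hc : (∫ s in ((n:ℝ) * δ)..t₀, h (t₀ - s) * d t₀)
                = (∫ s in (0:ℝ)..(t₀ - (n:ℝ) * δ), h s) * d t₀ := by
              rw [intervalIntegral.integral_mul_const]
              congr 1
              rw [intervalIntegral.integral_comp_sub_left h t₀, sub_self]
            have hd2 : (∫ s in (0:ℝ)..(t₀ - (n:ℝ) * δ), h s) ≤ 1 / (2 * L) := by
              refine hsmall _ (by linarith) ?_
              have := ht₀mem.2
              rw [hTdef] at this
              linarith
            have hM0 : 0 ≤ d t₀ := hdnn t₀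
            have hk := hd_le t₀ ht₀pos.le
            rw [← hsplit, hzero, zero_add] at hk
            have hstep : (∫ s in ((n:ℝ) * δ)..t₀, h (t₀ - s) * d s)
                ≤ 1 / (2 * L) * d t₀ := by
              refine hb.trans ?_
              rw [hc]
              rw [mul_comm (1 / (2 * L)) (d t₀), mul_comm _ (d t₀)] at *
              exact mul_le_mul_of_nonneg_left hd2 hM0
            have hLne : L ≠ 0 := ne_of_gt hLpos
            have h12 : L * (1 / (2 * L) * d t₀) = d t₀ / 2 := by
              field_simp
            have := mul_le_mul_of_nonneg_left hstep hLpos.le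
            linarith
        intro t ht
        have h1 := (hdleM t ht).trans hM
        have h2 := le_max_left (lam₁ t - lam₂ t) (0:ℝ)
        have : lam₁ t - lam₂ t ≤ d t := h2
        linarith
      intro t ht
      rw [mem_Icc] at ht
      refine hsup t (mem_Icc.mpr ⟨ht.1, ?_⟩)
      push_cast at ht
      linarith [ht.2]
  intro t ht
  obtain ⟨n, hn⟩ := exists_nat_ge (t / δ)
  have htn : t ≤ (n:ℝ) * δ := by
    rw [div_le_iff₀ hδ0] at hn
    linarith
  exact main n t ⟨ht, htn⟩
end

section
/- (Lipschitz stability in Φ, uniform version.) Let Φ₁, Φ₂ be Lipschitz continuous with |Φ₁|_Lip·‖h‖₁ < 1, h integrable on [0,∞), ξ locally bounded, and let λ₁, λ₂ be the corresponding solutions of λᵢ(t) = Φᵢ(ξ(t) + ∫₀^t h(t−s)λᵢ(s) ds). Then sup_{t≥0} |λ₁(t) − λ₂(t)| ≤ C·‖Φ₁ − Φ₂‖_∞ with C = 1/(1 − |Φ₁|_Lip·‖h‖₁). -/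
open MeasureTheory Set

/-- Lipschitz stability in Φ, uniform version: if |Φ₁|_Lip·‖h‖₁ < 1 then
sup_t |λ₁(t) − λ₂(t)| ≤ ‖Φ₁ − Φ₂‖_∞ / (1 − |Φ₁|_Lip·‖h‖₁). -/
theorem lipschitz_stability_uniform
    (Φ₁ Φ₂ h ξ lam₁ lam₂ : ℝ → ℝ) (L₁ L₂ D : ℝ)
    (hLip₁ : ∀ x y : ℝ, |Φ₁ x - Φ₁ y| ≤ L₁ * |x - y|)
    (hLip₂ : ∀ x y : ℝ, |Φ₂ x - Φ₂ y| ≤ L₂ * |x - y|)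
    (hΦ₁pos : ∀ x, 0 ≤ Φ₁ x) (hΦ₂pos : ∀ x, 0 ≤ Φ₂ x)
    (hh : IntegrableOn h (Ici 0))
    (hsub : L₁ * ∫ u in Ici (0:ℝ), |h u| < 1)
    (hξlocbdd : ∀ T > (0:ℝ), ∃ C : ℝ, ∀ t ∈ Icc (0:ℝ) T, |ξ t| ≤ C)
    (hD : ∀ x, |Φ₁ x - Φ₂ x| ≤ D)
    (hlam₁_meas : Measurable lam₁) (hlam₂_meas : Measurable lam₂)
    (hlam₁_locbdd : ∀ T > (0:ℝ), ∃ C : ℝ, ∀ t ∈ Icc (0:ℝ) T, |lam₁ t| ≤ C)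
    (hlam₂_locbdd : ∀ T > (0:ℝ), ∃ C : ℝ, ∀ t ∈ Icc (0:ℝ) T, |lam₂ t| ≤ C)
    (heq₁ : ∀ t ≥ (0:ℝ), lam₁ t = Φ₁ (ξ t + ∫ s in (0:ℝ)..t, h (t - s) * lam₁ s))
    (heq₂ : ∀ t ≥ (0:ℝ), lam₂ t = Φ₂ (ξ t + ∫ s in (0:ℝ)..t, h (t - s) * lam₂ s)) :
    ∀ t ≥ (0:ℝ),
      |lam₁ t - lam₂ t| ≤ D / (1 - L₁ * ∫ u in Ici (0:ℝ), |h u|) := by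
  set I : ℝ := ∫ u in Ici (0:ℝ), |h u| with hI
  have hInn : (0:ℝ) ≤ I := by
    apply integral_nonneg; intro x; exact abs_nonneg _
  have hL₁nn : (0:ℝ) ≤ L₁ := by
    have := hLip₁ 1 0
    have h0 : (0:ℝ) ≤ |Φ₁ 1 - Φ₁ 0| := abs_nonneg _
    simpa using le_trans h0 (by simpa using this)
  have hDnn : (0:ℝ) ≤ D := le_trans (abs_nonneg _) (hD 0)
  have hden : (0:ℝ) < 1 - L₁ * I := by linarith
  intro t₀ ht₀
  -- local bounds on [0, t₀+1]
  obtain ⟨C₁, hC₁⟩ := hlam₁_locbdd (t₀ + 1) (by linarith)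
  obtain ⟨C₂, hC₂⟩ := hlam₂_locbdd (t₀ + 1) (by linarith)
  set Δ : ℝ → ℝ := fun s => |lam₁ s - lam₂ s| with hΔ
  set S : Set ℝ := Δ '' (Icc 0 t₀) with hS
  have hSne : S.Nonempty := ⟨Δ 0, ⟨0, ⟨le_refl _, ht₀⟩, rfl⟩⟩
  have hSbdd : BddAbove S := by
    refine ⟨C₁ + C₂, ?_⟩
    rintro x ⟨s, hs, rfl⟩
    have hs' : s ∈ Icc (0:ℝ) (t₀+1) := ⟨hs.1, by linarith [hs.2]⟩
    calc Δ s ≤ |lam₁ s| + |lam₂ s| := abs_sub _ _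
    _ ≤ C₁ + C₂ := add_le_add (hC₁ s hs') (hC₂ s hs')
  set M : ℝ := sSup S with hM
  have hMnn : (0:ℝ) ≤ M :=
    le_trans (abs_nonneg _) (le_csSup hSbdd ⟨0, ⟨le_refl _, ht₀⟩, rfl⟩)
  -- key pointwise estimate
  have key : ∀ t ∈ Icc (0:ℝ) t₀, Δ t ≤ L₁ * I * M + D := by
    intro t ht
    have ht0 : (0:ℝ) ≤ t := ht.1
    -- integrability of h(t - ·) on 0..t
    have hhint : IntervalIntegrable h volume 0 t := by
      rw [intervalIntegrable_iff_integrableOn_Ioc_of_le ht0]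
      exact hh.mono_set (fun x hx => le_of_lt hx.1)
    have hht : IntervalIntegrable (fun s => h (t - s)) volume 0 t := by
      simpa using (hhint.comp_sub_left t).symm
    have haes : ∀ᵐ s ∂(volume.restrict (Set.uIoc (0:ℝ) t)), s ∈ Icc (0:ℝ) (t₀+1) := by
      rw [uIoc_of_le ht0]
      refine (ae_restrict_iff' measurableSet_Ioc).2 (ae_of_all _ ?_)
      intro s hs; exact ⟨le_of_lt hs.1, by linarith [hs.2, ht.2]⟩
    have hht' : IntegrableOn (fun s => h (t - s)) (Ioc 0 t) := by
      rw [intervalIntegrable_iff_integrableOn_Ioc_of_le ht0] at hht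
      exact hht
    have haes' : ∀ᵐ s ∂(volume.restrict (Ioc (0:ℝ) t)), s ∈ Icc (0:ℝ) (t₀+1) := by
      rw [uIoc_of_le ht0] at haes; exact haes
    have hint₁ : IntervalIntegrable (fun s => h (t - s) * lam₁ s) volume 0 t := by
      rw [intervalIntegrable_iff_integrableOn_Ioc_of_le ht0]
      have : IntegrableOn (fun s => lam₁ s * h (t - s)) (Ioc 0 t) := by
        refine Integrable.bdd_mul (c := |C₁|) hht' hlam₁_meas.aestronglyMeasurable.restrict ?_
        filter_upwards [haes'] with s hs
        exact le_trans (hC₁ s hs) (le_abs_self _)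
      simpa [mul_comm] using this
    have hint₂ : IntervalIntegrable (fun s => h (t - s) * lam₂ s) volume 0 t := by
      rw [intervalIntegrable_iff_integrableOn_Ioc_of_le ht0]
      have : IntegrableOn (fun s => lam₂ s * h (t - s)) (Ioc 0 t) := by
        refine Integrable.bdd_mul (c := |C₂|) hht' hlam₂_meas.aestronglyMeasurable.restrict ?_
        filter_upwards [haes'] with s hs
        exact le_trans (hC₂ s hs) (le_abs_self _)
      simpa [mul_comm] using this
    set x₁ : ℝ := ξ t + ∫ s in (0:ℝ)..t, h (t - s) * lam₁ s with hx₁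
    set x₂ : ℝ := ξ t + ∫ s in (0:ℝ)..t, h (t - s) * lam₂ s with hx₂
    have hx₁₂ : x₁ - x₂ = ∫ s in (0:ℝ)..t, h (t - s) * (lam₁ s - lam₂ s) := by
      rw [hx₁, hx₂]
      rw [add_sub_add_left_eq_sub, ← intervalIntegral.integral_sub hint₁ hint₂]
      congr 1; funext s; ring
    have habs : |x₁ - x₂| ≤ M * I := by
      rw [hx₁₂]
      have h1 : |∫ s in (0:ℝ)..t, h (t - s) * (lam₁ s - lam₂ s)|
          ≤ ∫ s in (0:ℝ)..t, |h (t - s) * (lam₁ s - lam₂ s)| :=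
        intervalIntegral.abs_integral_le_integral_abs ht0
      have hint₁₂ := hint₁.sub hint₂
      have hint₁₂' : IntervalIntegrable (fun s => |h (t - s) * (lam₁ s - lam₂ s)|) volume 0 t := by
        have : IntervalIntegrable (fun s => h (t - s) * lam₁ s - h (t - s) * lam₂ s) volume 0 t :=
          hint₁.sub hint₂
        have := this.abs
        simpa [mul_sub] using this
      have h2 : (∫ s in (0:ℝ)..t, |h (t - s) * (lam₁ s - lam₂ s)|)
          ≤ ∫ s in (0:ℝ)..t, |h (t - s)| * M := by
        apply intervalIntegral.integral_mono_on ht0 hint₁₂'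
        · exact (hht.abs).mul_const M
        · intro s hs
          rw [abs_mul]
          apply mul_le_mul_of_nonneg_left _ (abs_nonneg _)
          exact le_csSup hSbdd ⟨s, ⟨hs.1, le_trans hs.2 ht.2⟩, rfl⟩
      have h3 : (∫ s in (0:ℝ)..t, |h (t - s)| * M) = (∫ s in (0:ℝ)..t, |h (t - s)|) * M :=
        intervalIntegral.integral_mul_const _ _
      have h4 : (∫ s in (0:ℝ)..t, |h (t - s)|) = ∫ u in (0:ℝ)..t, |h u| := by
        have := intervalIntegral.integral_comp_sub_left (a := 0) (b := t) (fun u => |h u|) t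
        simpa using this
      have h5 : (∫ u in (0:ℝ)..t, |h u|) ≤ I := by
        rw [intervalIntegral.integral_of_le ht0, hI]
        apply setIntegral_mono_set hh.abs
        · exact ae_of_all _ fun x => abs_nonneg _
        · exact HasSubset.Subset.eventuallyLE (fun x hx => le_of_lt hx.1)
      calc |∫ s in (0:ℝ)..t, h (t - s) * (lam₁ s - lam₂ s)|
          ≤ (∫ u in (0:ℝ)..t, |h u|) * M := by rw [← h4, ← h3]; exact le_trans h1 h2
        _ ≤ I * M := mul_le_mul_of_nonneg_right h5 hMnn
        _ = M * I := mul_comm _ _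
    have := heq₁ t ht0
    have := heq₂ t ht0
    calc Δ t = |Φ₁ x₁ - Φ₂ x₂| := by rw [hΔ]; simp only; rw [heq₁ t ht0, heq₂ t ht0]
      _ ≤ |Φ₁ x₁ - Φ₁ x₂| + |Φ₁ x₂ - Φ₂ x₂| := abs_sub_le _ _ _
      _ ≤ L₁ * |x₁ - x₂| + D := add_le_add (hLip₁ _ _) (hD _)
      _ ≤ L₁ * (M * I) + D := by
          have := mul_le_mul_of_nonneg_left habs hL₁nn; linarith
      _ = L₁ * I * M + D := by ring
  have hMle : M ≤ L₁ * I * M + D := by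
    apply csSup_le hSne
    rintro x ⟨s, hs, rfl⟩
    exact key s hs
  have hMD : M ≤ D / (1 - L₁ * I) := by
    rw [le_div_iff₀ hden]; nlinarith
  exact le_trans (le_csSup hSbdd ⟨t₀, ⟨ht₀, le_refl _⟩, rfl⟩) hMD
end
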